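/- Let F be a field of characteristic 2 and β₁,…,βₙ ∈ F×. The diagonal bilinear Pfister form ⟨⟨β₁,…,βₙ⟩⟩_b (the tensor product of the forms ⟨1,βᵢ⟩_b) is anisotropic if and only if [F²(β₁,…,βₙ) : F²] = 2ⁿ. -/

import Mathlib

/-- The subfield of squares `F²` of a field of characteristic 2. -/
def sqSubfield (F : Type*) [Field F] [CharP F 2] : Subfield F where
  carrier := {x | ∃ y : F, y ^ 2 = x}
  mul_mem' := by rintro a b ⟨y, rfl⟩ ⟨z, rfl⟩; exact ⟨y * z, by ring⟩
  one_mem' := ⟨1, one_pow 2⟩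
  add_mem' := by
    rintro a b ⟨y, rfl⟩ ⟨z, rfl⟩
    exact ⟨y + z, by rw [add_sq]; linear_combination (y*z) * (CharP.cast_eq_zero F 2)⟩
  zero_mem' := ⟨0, by ring⟩
  neg_mem' := by rintro a ⟨y, rfl⟩; exact ⟨y, (CharTwo.neg_eq _).symm⟩
  inv_mem' := by rintro a ⟨y, rfl⟩; exact ⟨y⁻¹, by rw [inv_pow]⟩

/-- The monomial `β₁^{d₁} ⋯ βₙ^{dₙ}`. -/
def mono {R : Type*} [CommRing R] {n : ℕ} (β : Fin n → R) (d : Fin n → Bool) : R :=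
  ∏ i, if d i then β i else 1

/-- The diagonal bilinear `n`-fold Pfister form `⟨⟨β₁,…,βₙ⟩⟩_b`. -/
def bPf (F : Type*) [Field F] {n : ℕ} (β : Fin n → F) (v w : (Fin n → Bool) → F) : F :=
  ∑ d, mono β d * v d * w d

/-- Pure part of the bilinear Pfister form. -/
def bPfPure (F : Type*) [Field F] {n : ℕ} (β : Fin n → F)
    (v w : {d : Fin n → Bool // d ≠ fun _ => false} → F) : F :=
  ∑ d, mono β d.1 * v d * w d

/-- Anisotropy of a bilinear form. -/
def BAniso (F : Type*) [Field F] {V : Type*} [AddCommGroup V] [Module F V]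
    (B : V → V → F) : Prop :=
  ∀ v : V, v ≠ 0 → B v v ≠ 0

/-- Isometry of bilinear forms. -/
def BilinIsom (F : Type*) [Field F] {V W : Type*} [AddCommGroup V] [Module F V]
    [AddCommGroup W] [Module F W] (B₁ : V → V → F) (B₂ : W → W → F) : Prop :=
  ∃ e : V ≃ₗ[F] W, ∀ v w, B₂ (e v) (e w) = B₁ v w

/-- Isometry of quadratic forms (given as value functions). -/
def QuadIsom (F : Type*) [Field F] {V W : Type*} [AddCommGroup V] [Module F V]
    [AddCommGroup W] [Module F W] (q₁ : V → F) (q₂ : W → F) : Prop :=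
  ∃ e : V ≃ₗ[F] W, ∀ v, q₂ (e v) = q₁ v

/-- The quadratic Pfister form `⟨⟨β₁,…,β_m, a]]` as a value function. -/
def qPf (R : Type*) [CommRing R] {m : ℕ} (β : Fin m → R) (a : R)
    (x : (Fin m → Bool) → R × R) : R :=
  ∑ e, mono β e * ((x e).1 ^ 2 + (x e).1 * (x e).2 + a * (x e).2 ^ 2)

/-- Minimal index where `d` is `true`. -/
noncomputable def minIdx {n : ℕ} (d : Fin n → Bool) (hd : d ≠ fun _ => false) : Fin n :=
  (Finset.univ.filter fun i => d i = true).min' (by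
    obtain ⟨i, hi⟩ := Function.ne_iff.mp hd
    exact ⟨i, Finset.mem_filter.mpr ⟨Finset.mem_univ i, by simpa using hi⟩⟩)

/-- Remove the `ℓ`-th entry from a tuple. -/
def removeIdx {R : Type*} {n : ℕ} (α : Fin n → R) (ℓ : Fin n) (i : Fin (n - 1)) : R :=
  if h : (i : ℕ) < (ℓ : ℕ) then α ⟨i, by omega⟩ else α ⟨(i : ℕ) + 1, by omega⟩

/-- First `n-1` entries of a tuple. -/
def front {R : Type*} {n : ℕ} (α : Fin n → R) (i : Fin (n - 1)) : R :=
  α ⟨i, by omega⟩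

/-- Last entry of a tuple (junk value `0` if the tuple is empty). -/
def qlast {R : Type*} [CommRing R] {n : ℕ} (α : Fin n → R) : R :=
  if h : n = 0 then 0 else α ⟨n - 1, by omega⟩

section Aux

variable {F : Type*} [Field F] [CharP F 2] {n : ℕ}

lemma mono_one (β : Fin n → F) : mono β (fun _ => false) = 1 := by simp [mono]

lemma mono_single (β : Fin n → F) (i : Fin n) :
    mono β (fun j => decide (j = i)) = β i := by
  simp only [mono, decide_eq_true_eq]
  exact Finset.prod_ite_eq' Finset.univ i β |>.trans (by simp)

lemma bool_aux (x : F) (a b : Bool) :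
    (if a then x else 1) * (if b then x else 1) =
      (if a && b then x else 1) ^ 2 * (if (a != b) then x else 1) := by
  cases a <;> cases b <;> simp <;> ring

lemma mono_mul (β : Fin n → F) (d e : Fin n → Bool) :
    mono β d * mono β e =
      (mono β fun i => d i && e i) ^ 2 * mono β fun i => d i != e i := by
  simp only [mono, ← Finset.prod_mul_distrib, ← Finset.prod_pow]
  exact Finset.prod_congr rfl fun i _ => bool_aux (β i) (d i) (e i)

lemma smul_def' (c : sqSubfield F) (x : F) : c • x = (c : F) * x := rfl

end Aux


set_option synthInstance.maxHeartbeats 1000000 in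
set_option maxHeartbeats 1000000 in
/-- `⟨⟨β₁,…,βₙ⟩⟩_b` is anisotropic iff `[F²(β₁,…,βₙ) : F²] = 2ⁿ`. -/
theorem stmt_1 (F : Type*) [Field F] [CharP F 2] (n : ℕ) (β : Fin n → F)
    (hβ : ∀ i, β i ≠ 0) :
    BAniso F (bPf F β) ↔
      Module.finrank (sqSubfield F)
        (IntermediateField.adjoin (sqSubfield F) (Set.range β)) = 2 ^ n := by
  classical
  set K := sqSubfield F with hKdef
  have card2 : Fintype.card (Fin n → Bool) = 2 ^ n := by simp
  -- Step A: anisotropy ↔ linear independence of monomials over K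
  have stepA : BAniso F (bPf F β) ↔ LinearIndependent K fun d : Fin n → Bool => mono β d := by
    rw [Fintype.linearIndependent_iff]
    constructor
    · intro hani g hg d
      by_contra hgd
      set v : (Fin n → Bool) → F := fun e => Classical.choose (g e).2 with hv
      have hv2 : ∀ e, (v e) ^ 2 = (g e : F) := fun e => Classical.choose_spec (g e).2
      have hvne : v ≠ 0 := by
        intro h0
        apply hgd
        have : (g d : F) = 0 := by rw [← hv2 d, h0]; simp
        exact_mod_cast Subtype.ext this
      apply hani v hvne
      calc bPf F β v v = ∑ e, g e • mono β e := by
            refine Finset.sum_congr rfl fun e _ => ?_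
            rw [smul_def', ← hv2 e]; ring
        _ = 0 := hg
    · intro hli v hv hB
      apply hv
      have hg : ∑ e, (⟨(v e) ^ 2, v e, rfl⟩ : K) • mono β e = 0 := by
        rw [← hB]
        refine (Finset.sum_congr rfl fun e _ => ?_).symm
        rw [smul_def']; push_cast; ring
      have := hli _ hg
      funext e
      have h2 : (v e) ^ 2 = 0 := by simpa using Subtype.ext_iff.mp (this e)
      simpa using pow_eq_zero_iff (n := 2) (by norm_num) |>.mp h2
  -- Step B: the span of the monomials
  set M : Submodule K F := Submodule.span K (Set.range (mono β)) with hM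
  have hone : (1 : F) ∈ M := Submodule.subset_span ⟨fun _ => false, mono_one β⟩
  have hmulle : M * M ≤ M := by
    rw [hM, Submodule.span_mul_span]
    refine Submodule.span_le.mpr ?_
    rintro _ ⟨_, ⟨d, rfl⟩, _, ⟨e, rfl⟩, rfl⟩
    show mono β d * mono β e ∈ M
    rw [mono_mul]
    exact M.smul_mem (⟨_, _, rfl⟩ : K) (Submodule.subset_span ⟨_, rfl⟩)
  have hmul : ∀ x y : F, x ∈ M → y ∈ M → x * y ∈ M := fun x y hx hy =>
    hmulle (Submodule.mul_mem_mul hx hy)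
  set S : Subalgebra K F := M.toSubalgebra hone hmul with hS
  have halg : ∀ x ∈ Set.range β, IsAlgebraic K x := by
    rintro _ ⟨i, rfl⟩
    refine IsIntegral.isAlgebraic ⟨Polynomial.X ^ 2 - Polynomial.C ⟨(β i) ^ 2, β i, rfl⟩,
      Polynomial.monic_X_pow_sub_C _ (by norm_num), ?_⟩
    have hc : (algebraMap K F) (⟨(β i) ^ 2, β i, rfl⟩ : K) = (β i) ^ 2 := rfl
    simp [Polynomial.aeval_def, hc]
  have hadj : Algebra.adjoin K (Set.range β) = S := by
    apply le_antisymm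
    · apply Algebra.adjoin_le
      rintro _ ⟨i, rfl⟩
      exact Submodule.subset_span ⟨fun j => decide (j = i), mono_single β i⟩
    · intro x hx
      have hle : M ≤ Subalgebra.toSubmodule (Algebra.adjoin K (Set.range β)) := by
        refine Submodule.span_le.mpr ?_
        rintro _ ⟨d, rfl⟩
        simp only [SetLike.mem_coe, Subalgebra.mem_toSubmodule]
        refine Subalgebra.prod_mem _ fun i _ => ?_
        by_cases hdi : d i
        · simp only [hdi, if_true]; exact Algebra.subset_adjoin ⟨i, rfl⟩
        · simp only [hdi, if_false]; exact one_mem _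
      exact (Subalgebra.mem_toSubmodule _).mp (hle hx)
  have hE : (IntermediateField.adjoin K (Set.range β)).toSubalgebra = S :=
    (IntermediateField.adjoin_toSubalgebra_of_isAlgebraic halg).trans hadj
  have hfr : Module.finrank K (IntermediateField.adjoin K (Set.range β)) =
      Module.finrank K M := by
    have e1 : Module.finrank K (IntermediateField.adjoin K (Set.range β)) =
        Module.finrank K (IntermediateField.adjoin K (Set.range β)).toSubalgebra := rfl
    rw [e1, hE]
    rfl
  rw [stepA, hfr, linearIndependent_iff_card_eq_finrank_span, card2, Set.finrank, eq_comm]
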